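/- For nonzero real numbers t_a, t_b, t_c, t_d, t_e satisfying t_a·t_b = t_c·t_d and t_b·t_c = t_d·t_e, the linear map sending a↦t_a·a, b↦t_b·b, c↦t_c·c, d↦t_d·d, e↦t_e·e, f↦t_c·t_d·f, g↦t_b·t_c·g, h↦t_b·t_c·t_d·h is a Lie algebra automorphism of Γ. -/
import Mathlib


/-- The underlying 8-dimensional real vector space of Γ, with coordinates
`a,b,c,d,e,f,g,h` indexed by `0,…,7`. -/
def G3 : Type := Fin 8 → ℝ

noncomputable instance : AddCommGroup G3 := Pi.addCommGroup
noncomputable instance : Module ℝ G3 := Pi.module _ _ _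

lemma G3.add_apply (x y : G3) (i : Fin 8) : (x + y) i = x i + y i := rfl
lemma G3.smul_apply (t : ℝ) (x : G3) (i : Fin 8) : (t • x) i = t * x i := rfl
lemma G3.zero_apply (i : Fin 8) : (0 : G3) i = 0 := rfl

/-- The bracket determined by `[a,b]=[c,d]=f`, `[b,c]=[d,e]=g`, `[b,f]=[g,d]=h`. -/
def brkt (x y : G3) : G3 := fun i =>
  if i = 5 then x 0 * y 1 - x 1 * y 0 + x 2 * y 3 - x 3 * y 2
  else if i = 6 then x 1 * y 2 - x 2 * y 1 + x 3 * y 4 - x 4 * y 3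
  else if i = 7 then x 1 * y 5 - x 5 * y 1 + x 6 * y 3 - x 3 * y 6
  else 0

instance : Bracket G3 G3 := ⟨brkt⟩

lemma G3.lie_def (x y : G3) : ⁅x, y⁆ = brkt x y := rfl

noncomputable instance : LieRing G3 where
  add_lie x y z := by
    funext i; fin_cases i <;>
      simp [G3.lie_def, brkt, G3.add_apply] <;> ring
  lie_add x y z := by
    funext i; fin_cases i <;>
      simp [G3.lie_def, brkt, G3.add_apply] <;> ring
  lie_self x := by
    funext i; fin_cases i <;>
      simp [G3.lie_def, brkt, G3.zero_apply] <;> ring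
  leibniz_lie x y z := by
    funext i; fin_cases i <;>
      simp [G3.lie_def, brkt, G3.add_apply] <;> ring

noncomputable instance : LieAlgebra ℝ G3 where
  lie_smul t x y := by
    funext i; fin_cases i <;>
      simp [G3.lie_def, brkt, G3.smul_apply] <;> ring

/-- basis vector -/
def bv (j : Fin 8) : G3 := fun i => if i = j then 1 else 0

/-- The diagonal-type linear map `a↦ta·a, b↦tb·b, c↦tc·c, d↦td·d, e↦te·e,
f↦tc·td·f, g↦tb·tc·g, h↦tb·tc·td·h`. -/
def diagMap (ta tb tc td te : ℝ) (x : G3) : G3 := fun i =>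
  if i = 0 then ta * x 0
  else if i = 1 then tb * x 1
  else if i = 2 then tc * x 2
  else if i = 3 then td * x 3
  else if i = 4 then te * x 4
  else if i = 5 then tc * td * x 5
  else if i = 6 then tb * tc * x 6
  else tb * tc * td * x 7

/-- For nonzero reals `ta,…,te` with `ta·tb = tc·td` and `tb·tc = td·te`, the map
`diagMap ta tb tc td te` is a Lie algebra automorphism of Γ: it is linear, bijective
and preserves the bracket. -/
theorem stmt_6 (ta tb tc td te : ℝ) (hta : ta ≠ 0) (htb : tb ≠ 0) (htc : tc ≠ 0)
    (htd : td ≠ 0) (hte : te ≠ 0) (h1 : ta * tb = tc * td) (h2 : tb * tc = td * te) :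
    Function.Bijective (diagMap ta tb tc td te) ∧
    (∀ x y : G3, diagMap ta tb tc td te (x + y)
        = diagMap ta tb tc td te x + diagMap ta tb tc td te y) ∧
    (∀ (r : ℝ) (x : G3), diagMap ta tb tc td te (r • x) = r • diagMap ta tb tc td te x) ∧
    (∀ x y : G3, diagMap ta tb tc td te ⁅x, y⁆
        = ⁅diagMap ta tb tc td te x, diagMap ta tb tc td te y⁆) := by
  refine ⟨?_, ?_, ?_, ?_⟩
  · apply Function.bijective_iff_has_inverse.mpr
    refine ⟨diagMap ta⁻¹ tb⁻¹ tc⁻¹ td⁻¹ te⁻¹, ?_, ?_⟩ <;>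
      intro x <;> funext i <;> fin_cases i <;>
        simp [diagMap] <;> field_simp
  · intro x y; funext i; fin_cases i <;>
      simp [diagMap, G3.add_apply] <;> ring
  · intro r x; funext i; fin_cases i <;>
      simp [diagMap, G3.smul_apply] <;> ring
  · intro x y; funext i; fin_cases i <;>
      simp [diagMap, G3.lie_def, brkt]
    · linear_combination (x 1 * y 0 - x 0 * y 1) * h1
    · linear_combination (x 3 * y 4 - x 4 * y 3) * h2
    · ring
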